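/- arXiv:1907.08318 — 3 statements merged into one kernel-verified Lean document; each statement's English description precedes it below -/
import Mathlib

section
/- Let g : E₂ → ℝ ∪ {+∞} be proper and convex and let F : E₁ → E₂ be linear with rge F ∩ ri(dom g) ≠ ∅. Then for every p ∈ E₁, (g ∘ F)*(p) = min {g*(v) : v ∈ E₂, F*(v) = p} (the minimum being attained, possibly +∞), dom (g ∘ F)* = (F*)⁻¹(dom g*), and for every x̄ ∈ dom(g ∘ F), ∂(g ∘ F)(x̄) = F*(∂g(F(x̄))). -/
open scoped RealInnerProductSpace Pointwise
open Filter

noncomputable section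

/-- Convexity of an extended-real-valued function, defined via convexity of its epigraph. -/
def EConvexOn {E : Type*} [AddCommGroup E] [Module ℝ E] (f : E → EReal) : Prop :=
  Convex ℝ {p : E × ℝ | f p.1 ≤ (p.2 : EReal)}

/-- Closedness (lower semicontinuity) of an extended-real-valued function,
defined via closedness of its epigraph. -/
def EClosed {E : Type*} [TopologicalSpace E] (f : E → EReal) : Prop :=
  IsClosed {p : E × ℝ | f p.1 ≤ (p.2 : EReal)}

/-- Properness: the domain is nonempty and the function never takes the value `-∞`. -/
def EProper {E : Type*} (f : E → EReal) : Prop :=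
  (∃ x, f x < ⊤) ∧ ∀ x, f x ≠ ⊥

/-- The (effective) domain of an extended-real-valued function. -/
def edom {E : Type*} (f : E → EReal) : Set E := {x | f x < ⊤}

/-- The Fenchel conjugate. -/
def econj {E : Type*} [NormedAddCommGroup E] [InnerProductSpace ℝ E]
    (f : E → EReal) (y : E) : EReal :=
  ⨆ x, ((⟪y, x⟫ : ℝ) : EReal) - f x

/-- The convex subdifferential of `f` at `x₀`. -/
def esubdiff {E : Type*} [NormedAddCommGroup E] [InnerProductSpace ℝ E]
    (f : E → EReal) (x₀ : E) : Set E :=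
  {w | ∀ x, f x₀ + ((⟪w, x - x₀⟫ : ℝ) : EReal) ≤ f x}

/-- `K` is a cone: it is stable under multiplication by nonnegative scalars. -/
def IsCone {E : Type*} [SMul ℝ E] (K : Set E) : Prop :=
  ∀ ⦃t : ℝ⦄, 0 ≤ t → ∀ ⦃x⦄, x ∈ K → t • x ∈ K

/-- The polar cone `K° = {v : ⟪v,x⟫ ≤ 0 for all x ∈ K}`. -/
def polarCone {E : Type*} [NormedAddCommGroup E] [InnerProductSpace ℝ E] (K : Set E) : Set E :=
  {v | ∀ x ∈ K, ⟪v, x⟫ ≤ (0 : ℝ)}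

/-- The `K`-epigraph of a map `F` with domain `D`. -/
def epiK {E₁ E₂ : Type*} [AddCommGroup E₂] (K : Set E₂) (D : Set E₁) (F : E₁ → E₂) :
    Set (E₁ × E₂) :=
  {p | p.1 ∈ D ∧ p.2 - F p.1 ∈ K}

/-- The graph of a map `F` with domain `D`. -/
def gphF {E₁ E₂ : Type*} (D : Set E₁) (F : E₁ → E₂) : Set (E₁ × E₂) :=
  {p | p.1 ∈ D ∧ p.2 = F p.1}

open Classical in
/-- The scalarization `⟨v,F⟩` of the map `F` with domain `D`:
it equals `⟪v, F x⟫` on `D` and `+∞` elsewhere. -/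
def scal {E₁ E₂ : Type*} [NormedAddCommGroup E₂] [InnerProductSpace ℝ E₂]
    (v : E₂) (D : Set E₁) (F : E₁ → E₂) : E₁ → EReal :=
  fun x => if x ∈ D then ((⟪v, F x⟫ : ℝ) : EReal) else ⊤

open Classical in
/-- The composition `g ∘ F` for a map `F` with domain `D`:
it equals `g (F x)` on `D` and `+∞` elsewhere. -/
def compFn {E₁ E₂ : Type*} (g : E₂ → EReal) (D : Set E₁) (F : E₁ → E₂) : E₁ → EReal :=
  fun x => if x ∈ D then g (F x) else ⊤

open Classical in
/-- The indicator function of a set: `0` on `S` and `+∞` off `S`. -/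
def eindicator {E : Type*} (S : Set E) (x : E) : EReal := if x ∈ S then 0 else ⊤

/-- The support function of a set. -/
def suppFn {E : Type*} [NormedAddCommGroup E] [InnerProductSpace ℝ E] (S : Set E) (y : E) :
    EReal :=
  ⨆ x ∈ S, ((⟪x, y⟫ : ℝ) : EReal)

/-- The support function of a subset of a product of two inner product spaces,
with respect to the natural sum inner product on the product. -/
def suppFn2 {E₁ E₂ : Type*} [NormedAddCommGroup E₁] [InnerProductSpace ℝ E₁]
    [NormedAddCommGroup E₂] [InnerProductSpace ℝ E₂]
    (S : Set (E₁ × E₂)) (y : E₁ × E₂) : EReal :=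
  ⨆ p ∈ S, ((⟪p.1, y.1⟫ + ⟪p.2, y.2⟫ : ℝ) : EReal)

/-- The horizon (recession) cone of a set `C`. -/
def horizonCone {E : Type*} [AddCommGroup E] [Module ℝ E] [TopologicalSpace E] (C : Set E) :
    Set E :=
  {w | ∀ x ∈ C, ∀ t : ℝ, 0 ≤ t → x + t • w ∈ closure C}

/-- The lower semicontinuous hull:
`(cl f)(x) = inf {a : ∃ xₖ → x with f (xₖ) → a}`. -/
def lscHull {E : Type*} [TopologicalSpace E] (f : E → EReal) (x : E) : EReal :=
  sInf {a : EReal |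
    ∃ u : ℕ → E, Tendsto u atTop (nhds x) ∧ Tendsto (fun n => f (u n)) atTop (nhds a)}

/-! ### Auxiliary lemmas -/

section AuxEReal

theorem ereal_real (x : EReal) (hbot : x ≠ ⊥) (htop : x ≠ ⊤) : x = ((x.toReal : ℝ) : EReal) :=
  (EReal.coe_toReal htop hbot).symm

theorem ereal_add_coe_le_coe_iff (x : EReal) (a b : ℝ) :
    x + (a : EReal) ≤ (b : EReal) ↔ x ≤ ((b - a : ℝ) : EReal) := by
  induction x using EReal.rec with
  | bot => simp
  | coe r => rw [← EReal.coe_add]; constructor <;> intro h <;>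
      (rw [EReal.coe_le_coe_iff] at h ⊢; linarith)
  | top => simp [EReal.top_add_coe, ← EReal.coe_sub]

theorem ereal_le_add_coe_iff (a c : ℝ) (x : EReal) :
    (a : EReal) ≤ x + (c : EReal) ↔ ((a - c : ℝ) : EReal) ≤ x := by
  induction x using EReal.rec with
  | bot =>
      rw [EReal.bot_add]
      refine iff_of_false (by simp [le_bot_iff]) ?_
      rw [le_bot_iff]
      exact EReal.coe_ne_bot _
  | coe r => rw [← EReal.coe_add]; constructor <;> intro h <;>
      (rw [EReal.coe_le_coe_iff] at h ⊢; linarith)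
  | top => simp [EReal.top_add_coe]

theorem ereal_coe_sub_le (a c : ℝ) (x : EReal) (hx : x ≠ ⊥) :
    (a : EReal) - x ≤ (c : EReal) ↔ ((a - c : ℝ) : EReal) ≤ x := by
  induction x using EReal.rec with
  | bot => exact absurd rfl hx
  | coe r =>
      rw [← EReal.coe_sub]
      constructor <;> intro h <;> (rw [EReal.coe_le_coe_iff] at h ⊢; linarith)
  | top => simp

theorem ereal_add_coe_lt_top_iff (x : EReal) (a : ℝ) : x + (a : EReal) < ⊤ ↔ x < ⊤ := by
  induction x using EReal.rec with
  | bot => simp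
  | coe r => rw [← EReal.coe_add]
             exact iff_of_true (EReal.coe_lt_top _) (EReal.coe_lt_top _)
  | top => simp [EReal.top_add_coe]

theorem ereal_add_ne_bot (x : EReal) (hx : x ≠ ⊥) (a : ℝ) : x + (a : EReal) ≠ ⊥ := by
  induction x using EReal.rec with
  | bot => exact absurd rfl hx
  | coe r => rw [← EReal.coe_add]; exact EReal.coe_ne_bot _
  | top => simp [EReal.top_add_coe]

end AuxEReal

section AuxMain

variable {E E₁ E₂ : Type*}
  [NormedAddCommGroup E] [InnerProductSpace ℝ E] [FiniteDimensional ℝ E]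
  [NormedAddCommGroup E₁] [InnerProductSpace ℝ E₁] [FiniteDimensional ℝ E₁]
  [NormedAddCommGroup E₂] [InnerProductSpace ℝ E₂] [FiniteDimensional ℝ E₂]

omit [FiniteDimensional ℝ E] in
theorem prolong_aux {C : Set E} {x y : E} (hx : x ∈ intrinsicInterior ℝ C) (hy : y ∈ C) :
    ∃ ε : ℝ, 0 < ε ∧ x + ε • (x - y) ∈ C := by
  obtain ⟨x', hx', hx'x⟩ := mem_intrinsicInterior.1 hx
  have hxC : x ∈ C := intrinsicInterior_subset hx
  have hxS : x ∈ affineSpan ℝ C := subset_affineSpan ℝ C hxC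
  have hyS : y ∈ affineSpan ℝ C := subset_affineSpan ℝ C hy
  have hmem : ∀ ε : ℝ, x + ε • (x - y) ∈ affineSpan ℝ C := by
    intro ε
    have := AffineSubspace.smul_vsub_vadd_mem (affineSpan ℝ C) ε hxS hyS hxS
    simpa [vsub_eq_sub, vadd_eq_add, add_comm] using this
  set f : ℝ → affineSpan ℝ C := fun ε => ⟨x + ε • (x - y), hmem ε⟩ with hf
  have hfc : Continuous f := by
    apply Continuous.subtype_mk
    continuity
  have hf0 : f 0 = x' := by
    apply Subtype.ext
    simp [hf, hx'x]
  have : f ⁻¹' (interior ((↑) ⁻¹' C : Set (affineSpan ℝ C))) ∈ nhds (0:ℝ) := by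
    apply hfc.continuousAt.preimage_mem_nhds
    rw [hf0]
    exact isOpen_interior.mem_nhds hx'
  obtain ⟨δ, hδ, hball⟩ := Metric.mem_nhds_iff.1 this
  refine ⟨δ/2, by linarith, ?_⟩
  have h2 : f (δ/2) ∈ interior ((↑) ⁻¹' C : Set (affineSpan ℝ C)) := by
    apply hball
    simp only [Metric.mem_ball, Real.dist_eq, sub_zero]
    rw [abs_of_pos (by linarith)]
    linarith
  have h3 := interior_subset (s := ((↑) ⁻¹' C : Set (affineSpan ℝ C))) h2
  exact h3

omit [FiniteDimensional ℝ E] in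
theorem econvex_comb {h : E → EReal} (hconv : EConvexOn h) {y₁ y₂ : E} {a b θ : ℝ}
    (h₁ : h y₁ ≤ (a:EReal)) (h₂ : h y₂ ≤ (b:EReal)) (hθ : 0 ≤ θ) (hθ1 : θ ≤ 1) :
    h (θ • y₁ + (1-θ) • y₂) ≤ ((θ*a + (1-θ)*b : ℝ) : EReal) := by
  have m1 : ((y₁, a) : E × ℝ) ∈ {p : E × ℝ | h p.1 ≤ (p.2 : EReal)} := h₁
  have m2 : ((y₂, b) : E × ℝ) ∈ {p : E × ℝ | h p.1 ≤ (p.2 : EReal)} := h₂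
  have h1θ : (0:ℝ) ≤ 1 - θ := by linarith
  have := hconv m1 m2 hθ h1θ (by ring)
  simpa [Prod.smul_mk, Prod.mk_add_mk, smul_eq_mul] using this

set_option maxHeartbeats 1000000 in
/-- Core extension lemma: a Hahn–Banach style one-dimensional extension argument.
A linear functional dominated by a convex extended-real function on a subspace containing a
"relative interior"-type point of the domain extends to a dominated functional on the whole
space. -/
theorem extend_dominated {h : E → EReal} (hconv : EConvexOn h) (hbot : ∀ y, h y ≠ ⊥)
    {xb : E} (hxb : ∀ y ∈ edom h, ∃ ε : ℝ, 0 < ε ∧ xb + ε • (xb - y) ∈ edom h) :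
    ∀ (n : ℕ) (M : Submodule ℝ E), Module.finrank ℝ E ≤ Module.finrank ℝ M + n →
      ∀ (ℓ : E →ₗ[ℝ] ℝ), xb ∈ M → (∀ m ∈ M, ((ℓ m : ℝ):EReal) ≤ h m) →
      ∃ ℓ' : E →ₗ[ℝ] ℝ, (∀ m ∈ M, ℓ' m = ℓ m) ∧ ∀ y, ((ℓ' y :ℝ):EReal) ≤ h y := by
  intro n
  induction n with
  | zero =>
    intro M hn ℓ hxbM hdom
    have hM : M = ⊤ := Submodule.eq_top_of_finrank_eq
      (le_antisymm (Submodule.finrank_le M) (by omega))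
    exact ⟨ℓ, fun m _ => rfl, fun y => hdom y (hM ▸ Submodule.mem_top)⟩
  | succ n IH =>
    intro M hn ℓ hxbM hdom
    by_cases hM : M = ⊤
    · exact ⟨ℓ, fun m _ => rfl, fun y => hdom y (hM ▸ Submodule.mem_top)⟩
    have hMo : Mᗮ ≠ ⊥ := fun hbotM => hM (Submodule.orthogonal_eq_bot_iff.1 hbotM)
    obtain ⟨e, heMo, he0⟩ := Submodule.exists_mem_ne_zero_of_ne_bot hMo
    have heM : e ∉ M := by
      intro heM
      exact he0 (inner_self_eq_zero.1 (heMo e heM))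
    have hinner : ∀ m ∈ M, ⟪e, m⟫ = (0:ℝ) := by
      intro m hm
      rw [real_inner_comm]; exact heMo m hm
    set ψ : E →ₗ[ℝ] ℝ := (⟪e,e⟫)⁻¹ • (innerSL ℝ e).toLinearMap with hψ
    have hψM : ∀ m ∈ M, ψ m = 0 := by
      intro m hm; simp [hψ, hinner m hm]
    have hee : ⟪e,e⟫ ≠ (0:ℝ) := fun hc => he0 (inner_self_eq_zero.1 hc)
    have hψe : ψ e = 1 := by simp [hψ]; field_simp
    set Sp : Set ℝ := {r | ∃ m ∈ M, ∃ t : ℝ, 0 < t ∧ h (m + t • e) ≠ ⊤ ∧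
      r = ((h (m + t • e)).toReal - ℓ m)/t} with hSp
    set Sm : Set ℝ := {r | ∃ m ∈ M, ∃ t : ℝ, 0 < t ∧ h (m - t • e) ≠ ⊤ ∧
      r = (ℓ m - (h (m - t • e)).toReal)/t} with hSm
    have key : ∀ a ∈ Sm, ∀ b ∈ Sp, a ≤ b := by
      rintro a ⟨m', hm', s, hs, hts', rfl⟩ b ⟨m, hm, t, ht, hts, rfl⟩
      set A : ℝ := (h (m + t • e)).toReal
      set B : ℝ := (h (m' - s • e)).toReal
      have hA : h (m + t • e) ≤ (A : EReal) := le_of_eq (ereal_real _ (hbot _) hts)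
      have hB : h (m' - s • e) ≤ (B : EReal) := le_of_eq (ereal_real _ (hbot _) hts')
      have hst : 0 < s + t := by linarith
      set θ : ℝ := s/(s+t) with hθdef
      have hθ : 0 ≤ θ := by positivity
      have hθ1 : θ ≤ 1 := by rw [hθdef, div_le_one hst]; linarith
      have hcomb := econvex_comb hconv hA hB hθ hθ1
      have hz : θ • (m + t • e) + (1-θ) • (m' - s • e) = θ • m + (1-θ) • m' := by
        have h1θ : (1:ℝ) - θ = t/(s+t) := by rw [hθdef]; field_simp; ring
        rw [smul_add, smul_sub, h1θ, hθdef]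
        rw [smul_smul, smul_smul]
        have : s / (s + t) * t = t / (s + t) * s := by ring
        rw [this]
        abel
      rw [hz] at hcomb
      have hzM : θ • m + (1-θ) • m' ∈ M := M.add_mem (M.smul_mem _ hm) (M.smul_mem _ hm')
      have hℓz := hdom _ hzM
      have : ((ℓ (θ • m + (1-θ) • m') : ℝ) : EReal) ≤ ((θ*A + (1-θ)*B : ℝ):EReal) :=
        le_trans hℓz hcomb
      rw [EReal.coe_le_coe_iff] at this
      rw [map_add, map_smul, map_smul, smul_eq_mul, smul_eq_mul] at this
      have h1θ : (1:ℝ) - θ = t/(s+t) := by rw [hθdef]; field_simp; ring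
      rw [div_le_div_iff₀ hs ht]
      rw [hθdef, h1θ] at this
      have h2 : s * ℓ m + t * ℓ m' ≤ s * A + t * B := by
        have := mul_le_mul_of_nonneg_left this (le_of_lt hst)
        field_simp at this
        linarith
      nlinarith
    have swapP : (∃ m ∈ M, ∃ t : ℝ, 0 < t ∧ h (m + t • e) ≠ ⊤) →
        (∃ m ∈ M, ∃ t : ℝ, 0 < t ∧ h (m - t • e) ≠ ⊤) := by
      rintro ⟨m, hm, t, ht, hft⟩
      have hdm : m + t • e ∈ edom h := lt_top_iff_ne_top.2 hft
      obtain ⟨ε, hε, hmem⟩ := hxb _ hdm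
      refine ⟨xb + ε • (xb - m), M.add_mem hxbM (M.smul_mem _ (M.sub_mem hxbM hm)),
        ε * t, by positivity, ?_⟩
      have : xb + ε • (xb - m) - (ε*t) • e = xb + ε • (xb - (m + t • e)) := by
        module
      rw [this]
      exact lt_top_iff_ne_top.1 hmem
    have swapM : (∃ m ∈ M, ∃ t : ℝ, 0 < t ∧ h (m - t • e) ≠ ⊤) →
        (∃ m ∈ M, ∃ t : ℝ, 0 < t ∧ h (m + t • e) ≠ ⊤) := by
      rintro ⟨m, hm, t, ht, hft⟩
      have hdm : m - t • e ∈ edom h := lt_top_iff_ne_top.2 hft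
      obtain ⟨ε, hε, hmem⟩ := hxb _ hdm
      refine ⟨xb + ε • (xb - m), M.add_mem hxbM (M.smul_mem _ (M.sub_mem hxbM hm)),
        ε * t, by positivity, ?_⟩
      have : xb + ε • (xb - m) + (ε*t) • e = xb + ε • (xb - (m - t • e)) := by
        module
      rw [this]
      exact lt_top_iff_ne_top.1 hmem
    have hc : ∃ c : ℝ, (∀ a ∈ Sm, a ≤ c) ∧ (∀ b ∈ Sp, c ≤ b) := by
      by_cases hP : ∃ m ∈ M, ∃ t : ℝ, 0 < t ∧ h (m + t • e) ≠ ⊤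
      · have hQ := swapP hP
        obtain ⟨m, hm, t, ht, hft⟩ := hP
        have hSpne : Sp.Nonempty := ⟨_, m, hm, t, ht, hft, rfl⟩
        obtain ⟨m', hm', s, hs, hfs⟩ := hQ
        have hSmne : Sm.Nonempty := ⟨_, m', hm', s, hs, hfs, rfl⟩
        obtain ⟨b, hb⟩ := hSpne
        refine ⟨sSup Sm, fun a ha => le_csSup ⟨b, fun a' ha' => key a' ha' b hb⟩ ha,
          fun b' hb' => csSup_le hSmne (fun a ha => key a ha b' hb')⟩
      · refine ⟨0, ?_, ?_⟩
        · rintro a ⟨m, hm, t, ht, hft, rfl⟩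
          exact absurd (swapM ⟨m, hm, t, ht, hft⟩) hP
        · rintro b ⟨m, hm, t, ht, hft, rfl⟩
          exact absurd ⟨m, hm, t, ht, hft⟩ hP
    obtain ⟨c, hdown, hup⟩ := hc
    set ℓ₁ : E →ₗ[ℝ] ℝ := ℓ + (c - ℓ e) • ψ with hℓ₁
    have hℓ₁M : ∀ m ∈ M, ℓ₁ m = ℓ m := by
      intro m hm; simp [hℓ₁, hψM m hm]
    have hℓ₁me : ∀ m ∈ M, ∀ t : ℝ, ℓ₁ (m + t • e) = ℓ m + t * c := by
      intro m hm t
      simp only [hℓ₁, LinearMap.add_apply, LinearMap.smul_apply, map_add, map_smul,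
        smul_eq_mul, hψM m hm, hψe]
      ring
    have hdom1 : ∀ z ∈ M ⊔ (Submodule.span ℝ {e}), ((ℓ₁ z : ℝ):EReal) ≤ h z := by
      intro z hz
      rw [Submodule.mem_sup] at hz
      obtain ⟨m, hm, w, hw, rfl⟩ := hz
      obtain ⟨t, rfl⟩ := Submodule.mem_span_singleton.1 hw
      rw [hℓ₁me m hm t]
      by_cases hft : h (m + t • e) = ⊤
      · rw [hft]; exact le_top
      have hreal := ereal_real _ (hbot (m + t • e)) hft
      set A : ℝ := (h (m + t • e)).toReal
      rw [hreal, EReal.coe_le_coe_iff]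
      rcases lt_trichotomy t 0 with htn | rfl | htp
      · have heq : m - (-t) • e = m + t • e := by module
        have hmem : (ℓ m - A)/(-t) ∈ Sm := by
          refine ⟨m, hm, -t, by linarith, ?_, ?_⟩
          · rw [heq]; exact hft
          · rw [heq]
        have h5 := hdown ((ℓ m - A)/(-t)) hmem
        rw [div_le_iff₀ (by linarith : (0:ℝ) < -t)] at h5
        linarith
      · have h5 := hdom m hm
        simp only [zero_smul, add_zero] at hreal ⊢
        rw [hreal, EReal.coe_le_coe_iff] at h5
        linarith
      · have hmem : (A - ℓ m)/t ∈ Sp := ⟨m, hm, t, htp, hft, rfl⟩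
        have h5 := hup ((A - ℓ m)/t) hmem
        rw [le_div_iff₀ htp] at h5
        linarith
    have hlt : M < M ⊔ (Submodule.span ℝ {e}) := by
      refine lt_of_le_of_ne le_sup_left (fun hEq => heM ?_)
      rw [hEq]
      exact Submodule.mem_sup_right (Submodule.mem_span_singleton_self e)
    have hrank : Module.finrank ℝ E ≤ Module.finrank ℝ ↥(M ⊔ Submodule.span ℝ {e}) + n := by
      have := Submodule.finrank_lt_finrank_of_lt hlt
      omega
    obtain ⟨ℓ', hℓ'M, hℓ'dom⟩ := IH (M ⊔ Submodule.span ℝ {e}) hrank ℓ₁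
      (Submodule.mem_sup_left hxbM) hdom1
    refine ⟨ℓ', fun m hm => ?_, hℓ'dom⟩
    rw [hℓ'M m (Submodule.mem_sup_left hm), hℓ₁M m hm]

theorem mem_range_adjoint' (F : E₁ →ₗ[ℝ] E₂) {p : E₁}
    (hp : ∀ z, F z = 0 → ⟪p, z⟫ = (0:ℝ)) : ∃ u, LinearMap.adjoint F u = p := by
  have hker : (LinearMap.range (LinearMap.adjoint F))ᗮ = LinearMap.ker F := by
    ext v
    simp only [Submodule.mem_orthogonal, LinearMap.mem_range, LinearMap.mem_ker]
    constructor
    · intro hv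
      have : ∀ u : E₂, ⟪u, F v⟫ = (0:ℝ) := by
        intro u
        have := hv (LinearMap.adjoint F u) ⟨u, rfl⟩
        rwa [LinearMap.adjoint_inner_left] at this
      exact inner_self_eq_zero.1 (this (F v))
    · rintro hv u ⟨w, rfl⟩
      rw [LinearMap.adjoint_inner_left, hv, inner_zero_right]
  have hR : LinearMap.range (LinearMap.adjoint F) = (LinearMap.ker F)ᗮ := by
    rw [← hker, Submodule.orthogonal_orthogonal]
  have hmem : p ∈ (LinearMap.ker F)ᗮ := by
    rw [Submodule.mem_orthogonal]
    intro z hz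
    rw [real_inner_comm]
    exact hp z hz
  rw [← hR] at hmem
  exact hmem

theorem exists_vec (ℓ : E₂ →ₗ[ℝ] ℝ) : ∃ v : E₂, ∀ y, ⟪v, y⟫ = ℓ y := by
  refine ⟨(InnerProductSpace.toDual ℝ E₂).symm (LinearMap.toContinuousLinearMap ℓ), fun y => ?_⟩
  rw [InnerProductSpace.toDual_symm_apply]
  rfl

end AuxMain


variable {E E₁ E₂ : Type*}
  [NormedAddCommGroup E] [InnerProductSpace ℝ E] [FiniteDimensional ℝ E]
  [NormedAddCommGroup E₁] [InnerProductSpace ℝ E₁] [FiniteDimensional ℝ E₁]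
  [NormedAddCommGroup E₂] [InnerProductSpace ℝ E₂] [FiniteDimensional ℝ E₂]

/-- The linear case: if `g` is proper and convex, `F` is linear and
`rge F ∩ ri(dom g) ≠ ∅`, then `(g ∘ F)*(p) = min {g*(v) : F*(v) = p}` (attained whenever the
constraint set is nonempty), `dom (g ∘ F)* = F*(dom g*)`, and
`∂(g ∘ F)(x₀) = F*(∂g(F x₀))` on `dom (g ∘ F)`. -/
theorem conjugate_and_subdifferential_linear_case
    (g : E₂ → EReal) (hg_proper : EProper g) (hg_conv : EConvexOn g)
    (F : E₁ →ₗ[ℝ] E₂)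
    (hCQ : (Set.range F ∩ intrinsicInterior ℝ (edom g)).Nonempty) :
    (∀ p : E₁,
      econj (fun x => g (F x)) p = ⨅ v ∈ {v : E₂ | LinearMap.adjoint F v = p}, econj g v) ∧
    (∀ p : E₁, {v : E₂ | LinearMap.adjoint F v = p}.Nonempty →
      ∃ v : E₂, LinearMap.adjoint F v = p ∧ econj (fun x => g (F x)) p = econj g v) ∧
    edom (econj (fun x => g (F x))) = LinearMap.adjoint F '' edom (econj g) ∧
    (∀ x₀ : E₁, g (F x₀) < ⊤ →
      esubdiff (fun x => g (F x)) x₀ = LinearMap.adjoint F '' esubdiff g (F x₀)) := by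
    classical
  obtain ⟨w₀, hw₀r, hw⟩ := hCQ
  obtain ⟨x₁, rfl⟩ := hw₀r
  have hgbot := hg_proper.2
  have hx₁dom : F x₁ ∈ edom g := intrinsicInterior_subset hw
  have hx₁top : g (F x₁) ≠ ⊤ := lt_top_iff_ne_top.1 hx₁dom
  set r₁ : ℝ := (g (F x₁)).toReal with hr₁
  have hgx₁ : g (F x₁) = (r₁ : EReal) := ereal_real _ (hgbot _) hx₁top
  -- The key claim: any real bound on the conjugate of the composition is attained by a
  -- feasible dual vector.
  have claimC : ∀ (p : E₁) (α : ℝ), (∀ x, ((⟪p,x⟫:ℝ):EReal) - g (F x) ≤ (α:EReal)) →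
      ∃ v, LinearMap.adjoint F v = p ∧ ∀ y, ((⟪v,y⟫:ℝ):EReal) - g y ≤ (α:EReal) := by
    intro p α hα
    have hα' : ∀ x, ((⟪p,x⟫ - α : ℝ):EReal) ≤ g (F x) := fun x =>
      (ereal_coe_sub_le _ _ _ (hgbot _)).1 (hα x)
    have hker : ∀ z, F z = 0 → ⟪p, z⟫ = (0:ℝ) := by
      intro z hz
      by_contra hne
      have ht := hα' (x₁ + ((r₁ + α - ⟪p,x₁⟫ + 1)/⟪p,z⟫) • z)
      rw [map_add, map_smul, hz, smul_zero, add_zero, hgx₁, EReal.coe_le_coe_iff] at ht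
      rw [inner_add_right, real_inner_smul_right, div_mul_cancel₀ _ hne] at ht
      linarith
    obtain ⟨u, hu⟩ := mem_range_adjoint' F hker
    set h : E₂ → EReal := fun y => g y + (α : EReal) with hh
    have hhbot : ∀ y, h y ≠ ⊥ := fun y => ereal_add_ne_bot _ (hgbot y) α
    have hhconv : EConvexOn h := by
      intro q1 hq1 q2 hq2 a b ha hb hab
      simp only [Set.mem_setOf_eq, hh] at hq1 hq2 ⊢
      rw [ereal_add_coe_le_coe_iff] at hq1 hq2
      have hmem := hg_conv (show ((q1.1, q1.2 - α) : E₂ × ℝ) ∈ _ from hq1)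
        (show ((q2.1, q2.2 - α) : E₂ × ℝ) ∈ _ from hq2) ha hb hab
      simp only [Prod.smul_mk, Prod.mk_add_mk, Set.mem_setOf_eq, smul_eq_mul] at hmem
      have hsnd : (a • q1 + b • q2).2 = a * q1.2 + b * q2.2 := rfl
      have hfst : (a • q1 + b • q2).1 = a • q1.1 + b • q2.1 := rfl
      rw [hsnd, hfst, ereal_add_coe_le_coe_iff]
      have hEq : a*(q1.2-α)+b*(q2.2-α) = a*q1.2+b*q2.2 - α := by
        linear_combination (-α) * hab
      rw [← hEq]
      exact hmem
    have hedom : edom h = edom g := by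
      ext y
      simp only [edom, Set.mem_setOf_eq, hh, ereal_add_coe_lt_top_iff]
    have hprol : ∀ y ∈ edom h, ∃ ε : ℝ, 0 < ε ∧ F x₁ + ε • (F x₁ - y) ∈ edom h := by
      intro y hy
      rw [hedom] at hy ⊢
      exact prolong_aux hw hy
    set ℓ : E₂ →ₗ[ℝ] ℝ := (innerSL ℝ u).toLinearMap with hℓ
    have hℓp : ∀ x, ℓ (F x) = ⟪p, x⟫ := by
      intro x
      have h1 : (ℓ (F x) : ℝ) = ⟪u, F x⟫ := rfl
      rw [h1, ← LinearMap.adjoint_inner_left F, hu]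
    have hdomℓ : ∀ m ∈ LinearMap.range F, ((ℓ m : ℝ):EReal) ≤ h m := by
      rintro m ⟨x, rfl⟩
      rw [hℓp x, hh]
      rw [ereal_le_add_coe_iff]
      exact hα' x
    obtain ⟨ℓ', hℓ'M, hℓ'dom⟩ := extend_dominated hhconv hhbot hprol (Module.finrank ℝ E₂)
      (LinearMap.range F) (Nat.le_add_left _ _) ℓ ⟨x₁, rfl⟩ hdomℓ
    obtain ⟨v, hv⟩ := exists_vec ℓ'
    refine ⟨v, ?_, ?_⟩
    · refine ext_inner_right ℝ fun w' => ?_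
      rw [LinearMap.adjoint_inner_left, hv (F w'), hℓ'M (F w') ⟨w', rfl⟩, hℓp w']
    · intro y
      have h6 := hℓ'dom y
      rw [← hv y] at h6
      simp only [hh] at h6
      rw [ereal_le_add_coe_iff] at h6
      exact (ereal_coe_sub_le _ _ _ (hgbot y)).2 h6
  -- weak duality
  have easy : ∀ v : E₂, econj (fun x => g (F x)) (LinearMap.adjoint F v) ≤ econj g v := by
    intro v
    refine iSup_le fun x => ?_
    have h1 : ⟪LinearMap.adjoint F v, x⟫ = ⟪v, F x⟫ := LinearMap.adjoint_inner_left F x v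
    rw [h1]
    exact le_iSup_of_le (F x) le_rfl
  have hlb : ∀ p : E₁, ((⟪p, x₁⟫ - r₁ : ℝ) : EReal) ≤ econj (fun x => g (F x)) p := by
    intro p
    refine le_iSup_of_le x₁ ?_
    show ((⟪p, x₁⟫ - r₁ : ℝ) : EReal) ≤ ((⟪p, x₁⟫ : ℝ) : EReal) - g (F x₁)
    rw [hgx₁, ← EReal.coe_sub]
  have hnbot : ∀ p, econj (fun x => g (F x)) p ≠ ⊥ := by
    intro p hb
    have := hlb p
    rw [hb, le_bot_iff] at this
    exact EReal.coe_ne_bot _ this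
  have part1 : ∀ p : E₁,
      econj (fun x => g (F x)) p = ⨅ v ∈ {v : E₂ | LinearMap.adjoint F v = p}, econj g v := by
    intro p
    refine le_antisymm (le_iInf fun v => le_iInf fun hv => by rw [← hv]; exact easy v) ?_
    by_cases htop : econj (fun x => g (F x)) p = ⊤
    · rw [htop]; exact le_top
    · have hcoe : econj (fun x => g (F x)) p
          = (((econj (fun x => g (F x)) p).toReal : ℝ) : EReal) :=
        ereal_real _ (hnbot p) htop
      set α : ℝ := (econj (fun x => g (F x)) p).toReal with hαdef
      have hα : ∀ x, ((⟪p,x⟫:ℝ):EReal) - g (F x) ≤ (α:EReal) := fun x =>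
        le_trans (le_iSup (fun x => ((⟪p,x⟫:ℝ):EReal) - g (F x)) x) hcoe.le
      obtain ⟨v, hv, hvle⟩ := claimC p α hα
      have h7 : econj g v ≤ (α : EReal) := iSup_le hvle
      exact le_trans (iInf₂_le v hv) (h7.trans hcoe.ge)
  have part2 : ∀ p : E₁, {v : E₂ | LinearMap.adjoint F v = p}.Nonempty →
      ∃ v : E₂, LinearMap.adjoint F v = p ∧ econj (fun x => g (F x)) p = econj g v := by
    rintro p ⟨v₀, hv₀⟩
    by_cases htop : econj (fun x => g (F x)) p = ⊤
    · refine ⟨v₀, hv₀, ?_⟩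
      have h1 : econj g v₀ = ⊤ := by
        rw [← top_le_iff, ← htop, ← hv₀]
        exact easy v₀
      rw [htop, h1]
    · have hcoe : econj (fun x => g (F x)) p
          = (((econj (fun x => g (F x)) p).toReal : ℝ) : EReal) :=
        ereal_real _ (hnbot p) htop
      set α : ℝ := (econj (fun x => g (F x)) p).toReal with hαdef
      have hα : ∀ x, ((⟪p,x⟫:ℝ):EReal) - g (F x) ≤ (α:EReal) := fun x =>
        le_trans (le_iSup (fun x => ((⟪p,x⟫:ℝ):EReal) - g (F x)) x) hcoe.le
      obtain ⟨v, hv, hvle⟩ := claimC p α hα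
      refine ⟨v, hv, le_antisymm (by rw [← hv]; exact easy v) ?_⟩
      exact (iSup_le hvle).trans hcoe.ge
  have part3 : edom (econj fun x => g (F x)) = LinearMap.adjoint F '' edom (econj g) := by
    ext p
    constructor
    · intro hp
      have htop : econj (fun x => g (F x)) p ≠ ⊤ := lt_top_iff_ne_top.1 hp
      have hcoe : econj (fun x => g (F x)) p
          = (((econj (fun x => g (F x)) p).toReal : ℝ) : EReal) :=
        ereal_real _ (hnbot p) htop
      set α : ℝ := (econj (fun x => g (F x)) p).toReal with hαdef
      have hα : ∀ x, ((⟪p,x⟫:ℝ):EReal) - g (F x) ≤ (α:EReal) := fun x =>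
        le_trans (le_iSup (fun x => ((⟪p,x⟫:ℝ):EReal) - g (F x)) x) hcoe.le
      obtain ⟨v, hv, hvle⟩ := claimC p α hα
      exact ⟨v, lt_of_le_of_lt (iSup_le hvle) (EReal.coe_lt_top α), hv⟩
    · rintro ⟨v, hv, rfl⟩
      exact lt_of_le_of_lt (easy v) hv
  have part4 : ∀ x₀ : E₁, g (F x₀) < ⊤ →
      esubdiff (fun x => g (F x)) x₀ = LinearMap.adjoint F '' esubdiff g (F x₀) := by
    intro x₀ hx₀
    have hgx₀ : g (F x₀) = (((g (F x₀)).toReal : ℝ) : EReal) :=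
      ereal_real _ (hgbot _) (lt_top_iff_ne_top.1 hx₀)
    set r₀ : ℝ := (g (F x₀)).toReal with hr₀
    ext w
    simp only [esubdiff, Set.mem_setOf_eq, Set.mem_image]
    constructor
    · intro hwmem
      set αc : ℝ := ⟪w, x₀⟫ - r₀ with hαc
      have hα : ∀ x, ((⟪w,x⟫:ℝ):EReal) - g (F x) ≤ (αc:EReal) := by
        intro x
        by_cases hgt : g (F x) = ⊤
        · rw [hgt]
          simp
        · have hs := hwmem x
          have hgr : g (F x) = (((g (F x)).toReal :ℝ):EReal) := ereal_real _ (hgbot _) hgt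
          rw [hgx₀, hgr, ← EReal.coe_add, EReal.coe_le_coe_iff, inner_sub_right] at hs
          rw [hgr, ← EReal.coe_sub, EReal.coe_le_coe_iff, hαc]
          linarith
      obtain ⟨v, hv, hvle⟩ := claimC w αc hα
      have hwx₀ : ⟪w, x₀⟫ = ⟪v, F x₀⟫ := by rw [← hv, LinearMap.adjoint_inner_left]
      refine ⟨v, ?_, hv⟩
      intro y
      by_cases hgt : g y = ⊤
      · rw [hgt]; exact le_top
      · have hs := hvle y
        have hgr : g y = (((g y).toReal:ℝ):EReal) := ereal_real _ (hgbot _) hgt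
        rw [hgr, ← EReal.coe_sub, EReal.coe_le_coe_iff, hαc, hwx₀] at hs
        rw [hgr, hgx₀, ← EReal.coe_add, EReal.coe_le_coe_iff, inner_sub_right]
        linarith
    · rintro ⟨v, hvmem, rfl⟩
      intro x
      have h1 : ⟪LinearMap.adjoint F v, x - x₀⟫ = ⟪v, F x - F x₀⟫ := by
        rw [LinearMap.adjoint_inner_left, map_sub]
      rw [h1]
      exact hvmem (F x)
  exact ⟨part1, part2, part3, part4⟩
end
end

section
/- Let f : E₁ → ℝ ∪ {+∞} be proper and convex, let K ⊆ E₂ be a closed, convex cone, and let F : E₁ → E₂ be K-convex (with dom F = E₁). Assume the Slater-type condition F(ri(dom f)) ∩ ri(−K) ≠ ∅. Then inf {f(x) : x ∈ E₁, F(x) ∈ −K} = max_{v ∈ −K°} inf_{x ∈ E₁} (f(x) + ⟨v, F(x)⟩), where the maximum on the right-hand side is attained. -/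
open scoped RealInnerProductSpace Pointwise
open Filter

noncomputable section

theorem mem_intrinsicInterior_iff_ball' {W : Type*} [NormedAddCommGroup W] [NormedSpace ℝ W]
    {C : Set W} {z : W} :
    z ∈ intrinsicInterior ℝ C ↔ z ∈ affineSpan ℝ C ∧ ∃ δ : ℝ, 0 < δ ∧
      ∀ p ∈ (affineSpan ℝ C : Set W), dist p z < δ → p ∈ C := by
  constructor
  · intro h
    obtain ⟨y, hy, rfl⟩ := mem_intrinsicInterior.1 h
    refine ⟨y.2, ?_⟩
    rw [mem_interior_iff_mem_nhds, Metric.mem_nhds_iff] at hy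
    obtain ⟨δ, hδ, hball⟩ := hy
    refine ⟨δ, hδ, fun p hp hdist => ?_⟩
    exact hball (show (⟨p, hp⟩ : affineSpan ℝ C) ∈ Metric.ball y δ by
      rwa [Metric.mem_ball, Subtype.dist_eq])
  · rintro ⟨hz, δ, hδ, hb⟩
    refine mem_intrinsicInterior.2 ⟨⟨z, hz⟩, ?_, rfl⟩
    rw [mem_interior_iff_mem_nhds, Metric.mem_nhds_iff]
    refine ⟨δ, hδ, fun q hq => ?_⟩
    exact hb q q.2 (by rwa [Metric.mem_ball, Subtype.dist_eq] at hq)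

theorem extend_beyond' {W : Type*} [NormedAddCommGroup W] [NormedSpace ℝ W]
    {C : Set W} {z y : W} (hz : z ∈ intrinsicInterior ℝ C) (hy : y ∈ C) :
    ∃ ε : ℝ, 0 < ε ∧ z + ε • (z - y) ∈ C := by
  obtain ⟨hzs, δ, hδ, hb⟩ := mem_intrinsicInterior_iff_ball'.1 hz
  have hpos : 0 < ‖z - y‖ + 1 := by positivity
  set ε := δ / (2 * (‖z - y‖ + 1)) with hε
  have hεpos : 0 < ε := by positivity
  refine ⟨ε, hεpos, hb _ ?_ ?_⟩
  · have h1 : z ∈ affineSpan ℝ C := hzs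
    have h2 : y ∈ affineSpan ℝ C := subset_affineSpan ℝ C hy
    have := (affineSpan ℝ C).smul_vsub_vadd_mem ε h1 h2 h1
    simpa [vsub_eq_sub, vadd_eq_add, add_comm] using this
  · have : dist (z + ε • (z - y)) z = ε * ‖z - y‖ := by
      rw [dist_eq_norm]
      simp [norm_smul, abs_of_pos hεpos]
    rw [this]
    calc ε * ‖z - y‖ ≤ ε * (‖z - y‖ + 1) := by nlinarith [norm_nonneg (z - y)]
      _ = δ / 2 := by
        rw [hε, div_mul_eq_mul_div, div_eq_div_iff (by positivity) (by norm_num)]; ring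
      _ < δ := by linarith

/-- Proper separation of a point from a convex set not containing it in its relative interior. -/
theorem proper_separation' {W : Type*} [NormedAddCommGroup W] [NormedSpace ℝ W]
    [FiniteDimensional ℝ W] {C : Set W} (hC : Convex ℝ C) (hne : C.Nonempty) {z : W}
    (hz : z ∉ intrinsicInterior ℝ C) :
    ∃ φ : W →L[ℝ] ℝ, (∀ c ∈ C, φ z ≤ φ c) ∧ ∃ c ∈ C, φ z < φ c := by
  obtain ⟨c₀, hc₀⟩ := hne
  by_cases hzsp : z ∈ affineSpan ℝ C
  · -- z in the affine span: work in the direction submodule V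
    set V : Submodule ℝ W := (affineSpan ℝ C).direction with hV
    set D : Set V := {w | (w : W) + z ∈ C} with hD
    have hmemD : ∀ c ∈ C, c - z ∈ V := fun c hc =>
      (vsub_eq_sub c z) ▸ AffineSubspace.vsub_mem_direction (subset_affineSpan ℝ C hc) hzsp
    have hDconv : Convex ℝ D := by
      intro w₁ h₁ w₂ h₂ a b ha hb hab
      have h3 := hC h₁ h₂ ha hb hab
      have : ((a • w₁ + b • w₂ : V) : W) + z
          = a • ((w₁ : W) + z) + b • ((w₂ : W) + z) := by
        push_cast
        have : a • ((w₁ : W) + z) + b • ((w₂ : W) + z)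
            = a • (w₁ : W) + b • (w₂ : W) + (a + b) • z := by module
        rw [this, hab, one_smul]
      show ((a • w₁ + b • w₂ : V) : W) + z ∈ C
      rw [this]; exact h3
    have hd₀ : (⟨c₀ - z, hmemD c₀ hc₀⟩ : V) ∈ D := by
      show (c₀ - z) + z ∈ C
      simpa using hc₀
    -- the affine span of D is everything
    have hspanD : affineSpan ℝ D = ⊤ := by
      rw [AffineSubspace.affineSpan_eq_top_iff_vectorSpan_eq_top_of_nonempty ℝ V V ⟨_, hd₀⟩]
      rw [vectorSpan_def]
      rw [Submodule.eq_top_iff']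
      intro w
      have h1 : (w : W) ∈ Submodule.span ℝ (C -ᵥ C : Set W) := by
        rw [← vectorSpan_def, ← direction_affineSpan]
        exact w.2
      have h2 : (C -ᵥ C : Set W) ⊆ (V.subtype) '' (D -ᵥ D : Set V) := by
        intro a ha
        obtain ⟨c₁, hc₁, c₂, hc₂, rfl⟩ := Set.mem_vsub.1 ha
        have hd₁ : (⟨c₁ - z, hmemD c₁ hc₁⟩ : V) ∈ D := by
          show (c₁ - z) + z ∈ C; simpa using hc₁
        have hd₂ : (⟨c₂ - z, hmemD c₂ hc₂⟩ : V) ∈ D := by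
          show (c₂ - z) + z ∈ C; simpa using hc₂
        refine ⟨_, Set.vsub_mem_vsub hd₁ hd₂, ?_⟩
        simp [vsub_eq_sub]
      have h3 : Submodule.span ℝ (C -ᵥ C : Set W)
          ≤ Submodule.map V.subtype (Submodule.span ℝ (D -ᵥ D : Set V)) := by
        rw [← Submodule.span_image]
        exact Submodule.span_mono h2
      obtain ⟨w', hw', hww'⟩ := h3 h1
      have : w' = w := Subtype.ext hww'
      rwa [← this]
    -- 0 is not in the interior of D
    have hD0 : (0 : V) ∉ interior D := by
      intro h0
      apply hz
      rw [mem_intrinsicInterior_iff_ball']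
      refine ⟨hzsp, ?_⟩
      rw [mem_interior_iff_mem_nhds, Metric.mem_nhds_iff] at h0
      obtain ⟨δ, hδ, hball⟩ := h0
      refine ⟨δ, hδ, fun p hp hdist => ?_⟩
      have hpV : p - z ∈ V :=
        (vsub_eq_sub p z) ▸ AffineSubspace.vsub_mem_direction hp hzsp
      have hmem : (⟨p - z, hpV⟩ : V) ∈ Metric.ball (0 : V) δ := by
        rw [Metric.mem_ball, Subtype.dist_eq]
        simpa [dist_eq_norm] using (dist_eq_norm p z ▸ hdist)
      have := hball hmem
      show p ∈ C
      have h' : (p - z) + z ∈ C := this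
      simpa using h'
    have hint : (interior D).Nonempty :=
      (hDconv.interior_nonempty_iff_affineSpan_eq_top).2 hspanD
    obtain ⟨φ₀, u, hlt, hge⟩ := geometric_hahn_banach_open (hDconv.interior)
      isOpen_interior (convex_singleton (0 : V)) (Set.disjoint_singleton_right.2 hD0)
    have hu0 : u ≤ 0 := by simpa using hge 0 rfl
    obtain ⟨d₁, hd₁⟩ := hint
    have hDle : ∀ d ∈ D, φ₀ d ≤ 0 := by
      intro d hd
      by_contra hpos
      push_neg at hpos
      set c := φ₀ d with hc
      set c₁ := φ₀ d₁ with hc₁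
      have hc₁0 : c₁ < 0 := lt_of_lt_of_le (hlt d₁ hd₁) hu0
      have hcc₁ : 0 < c - c₁ := by linarith
      set t : ℝ := min 1 (c / (2 * (c - c₁))) with ht
      have htpos : 0 < t := lt_min one_pos (by positivity)
      have ht1 : t ≤ 1 := min_le_left _ _
      have hmem := hDconv.add_smul_sub_mem_interior hd hd₁ ⟨htpos, ht1⟩
      have hval : φ₀ (d + t • (d₁ - d)) = c + t * (c₁ - c) := by
        rw [map_add, map_smul, map_sub, smul_eq_mul]
        try ring
      have hlt' := hlt _ hmem
      rw [hval] at hlt'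
      have ht2 : t ≤ c / (2 * (c - c₁)) := min_le_right _ _
      have h4 : t * (2 * (c - c₁)) ≤ c := by
        rwa [le_div_iff₀ (by positivity)] at ht2
      nlinarith
    -- extend -φ₀ to W
    obtain ⟨ψ, hψ⟩ := LinearMap.exists_extend (φ₀ : V →ₗ[ℝ] ℝ)
    set φ : W →L[ℝ] ℝ := -(LinearMap.toContinuousLinearMap ψ) with hφ
    have hkey : ∀ w : V, φ w = -φ₀ w := by
      intro w
      have : ψ (V.subtype w) = φ₀ w := by rw [← LinearMap.comp_apply, hψ]; rfl
      simp only [hφ, ContinuousLinearMap.neg_apply]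
      rw [show (LinearMap.toContinuousLinearMap ψ) (w : W) = ψ (w : W) from rfl]
      rw [show (V.subtype w : W) = (w : W) from rfl] at this
      rw [this]
    refine ⟨φ, ?_, ?_⟩
    · intro c hc
      have hdc : (⟨c - z, hmemD c hc⟩ : V) ∈ D := by
        show (c - z) + z ∈ C; simpa using hc
      have h1 : φ (c - z) = -φ₀ ⟨c - z, hmemD c hc⟩ := hkey ⟨c - z, hmemD c hc⟩
      have h2 := hDle _ hdc
      have : 0 ≤ φ (c - z) := by rw [h1]; linarith
      rw [map_sub] at this
      linarith
    · refine ⟨(d₁ : W) + z, ?_, ?_⟩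
      · have hmem : d₁ ∈ D := interior_subset hd₁
        exact hmem
      · have h1 : φ (((d₁ : W) + z) - z) = -φ₀ d₁ := by
          rw [show ((d₁ : W) + z) - z = (d₁ : W) by abel]; exact hkey d₁
        have h2 : φ₀ d₁ < 0 := lt_of_lt_of_le (hlt d₁ hd₁) hu0
        rw [map_sub] at h1
        linarith
  · -- z outside the (closed) affine span: strict separation
    have hclosed : IsClosed (affineSpan ℝ C : Set W) :=
      (affineSpan ℝ C).closed_of_finiteDimensional
    have hconv : Convex ℝ (affineSpan ℝ C : Set W) := (affineSpan ℝ C).convex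
    obtain ⟨φ, u, h1, h2⟩ := geometric_hahn_banach_point_closed hconv hclosed hzsp
    refine ⟨φ, fun c hc => (h1.trans (h2 c (subset_affineSpan ℝ C hc))).le,
      c₀, hc₀, h1.trans (h2 c₀ (subset_affineSpan ℝ C hc₀))⟩

theorem aux_nonneg' {a b c : ℝ} (h : ∀ s : ℝ, 0 ≤ s → b ≤ c + s * a) : 0 ≤ a := by
  by_contra h'
  push_neg at h'
  have h1 := h (max 0 ((b - c - 1) / a)) (le_max_left _ _)
  have h2 : (b - c - 1) / a ≤ max 0 ((b - c - 1) / a) := le_max_right _ _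
  have h3 : max 0 ((b - c - 1) / a) * a ≤ (b - c - 1) / a * a :=
    mul_le_mul_of_nonpos_right h2 h'.le
  rw [div_mul_cancel₀ _ (ne_of_lt h')] at h3
  nlinarith

theorem hrealE' (a : EReal) (h1 : a ≠ ⊤) (h2 : a ≠ ⊥) : ∃ r : ℝ, a = (r : EReal) := by
  lift a to ℝ using ⟨h1, h2⟩
  exact ⟨a, rfl⟩

variable {E E₁ E₂ : Type*}
  [NormedAddCommGroup E] [InnerProductSpace ℝ E] [FiniteDimensional ℝ E]
  [NormedAddCommGroup E₁] [InnerProductSpace ℝ E₁] [FiniteDimensional ℝ E₁]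
  [NormedAddCommGroup E₂] [InnerProductSpace ℝ E₂] [FiniteDimensional ℝ E₂]

/-- Strong Lagrangian duality with dual attainment for the conic program
`min f(x) s.t. F(x) ∈ -K`, under the Slater-type condition `F(ri(dom f)) ∩ ri(-K) ≠ ∅`. -/
theorem conic_program_strong_duality
    (f : E₁ → EReal) (hf_proper : EProper f) (hf_conv : EConvexOn f)
    (K : Set E₂) (hK_cone : IsCone K) (hK_closed : IsClosed K) (hK_conv : Convex ℝ K)
    (F : E₁ → E₂)
    (hF : ∀ x y : E₁, ∀ l : ℝ, l ∈ Set.Icc (0 : ℝ) 1 →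
      l • F x + (1 - l) • F y - F (l • x + (1 - l) • y) ∈ K)
    (hCQ : (F '' intrinsicInterior ℝ (edom f) ∩ intrinsicInterior ℝ (-K)).Nonempty) :
    ∃ v ∈ -polarCone K,
      (⨅ x ∈ {x : E₁ | F x ∈ -K}, f x)
        = (⨅ x : E₁, (f x + ((⟪v, F x⟫ : ℝ) : EReal))) ∧
      ∀ w ∈ -polarCone K,
        (⨅ x : E₁, (f x + ((⟪w, F x⟫ : ℝ) : EReal)))
          ≤ ⨅ x : E₁, (f x + ((⟪v, F x⟫ : ℝ) : EReal)) := by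
    classical
  obtain ⟨y₀, ⟨x₀, hx₀ri, hy₀eq⟩, hy₀ri⟩ := hCQ
  have hFx₀ri : F x₀ ∈ intrinsicInterior ℝ (-K) := hy₀eq ▸ hy₀ri
  have hx₀dom : x₀ ∈ edom f := intrinsicInterior_subset hx₀ri
  have hFx₀mem : F x₀ ∈ -K := intrinsicInterior_subset hFx₀ri
  have hnegFx₀K : -F x₀ ∈ K := Set.mem_neg.1 hFx₀mem
  have h0K : (0 : E₂) ∈ K := by
    have := hK_cone le_rfl hnegFx₀K
    rwa [zero_smul] at this
  have hKadd : ∀ k₁ ∈ K, ∀ k₂ ∈ K, k₁ + k₂ ∈ K := by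
    intro k₁ h₁ k₂ h₂
    have hmid : (1/2 : ℝ) • k₁ + (1/2 : ℝ) • k₂ ∈ K :=
      hK_conv h₁ h₂ (by norm_num) (by norm_num) (by norm_num)
    have := hK_cone (show (0:ℝ) ≤ 2 by norm_num) hmid
    have heq : (2:ℝ) • ((1/2 : ℝ) • k₁ + (1/2 : ℝ) • k₂) = k₁ + k₂ := by
      rw [smul_add, smul_smul, smul_smul]; norm_num
    rwa [heq] at this
  set S : Set E₁ := {x : E₁ | F x ∈ -K} with hS
  set p : EReal := ⨅ x ∈ S, f x with hpdef
  -- weak duality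
  have hweak : ∀ w ∈ -polarCone K,
      (⨅ x : E₁, (f x + ((⟪w, F x⟫ : ℝ) : EReal))) ≤ p := by
    intro w hw
    refine le_iInf₂ fun x hx => ?_
    have hw' : -w ∈ polarCone K := Set.mem_neg.1 hw
    have hinner : ⟪w, F x⟫ ≤ (0:ℝ) := by
      have := hw' (-F x) (Set.mem_neg.1 hx)
      rwa [inner_neg_neg] at this
    calc (⨅ x : E₁, (f x + ((⟪w, F x⟫ : ℝ) : EReal))) ≤ f x + ((⟪w, F x⟫ : ℝ) : EReal) :=
          iInf_le _ x
      _ ≤ f x + 0 := add_le_add_right (by exact_mod_cast hinner) _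
      _ = f x := add_zero _
  have hx₀S : x₀ ∈ S := hFx₀mem
  have hple : p ≤ f x₀ := iInf₂_le x₀ hx₀S
  have hplt : p < ⊤ := lt_of_le_of_lt hple hx₀dom
  by_cases hpbot : p = ⊥
  · -- primal value -∞ : take v = 0
    have hmem0 : (0 : E₂) ∈ -polarCone K := by
      rw [Set.mem_neg, neg_zero]
      intro k hk
      simp [polarCone, inner_zero_left]
    have hdual0 : (⨅ x : E₁, (f x + ((⟪(0:E₂), F x⟫ : ℝ) : EReal))) = ⨅ x : E₁, f x := by
      apply iInf_congr
      intro x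
      simp [inner_zero_left]
    have hinfle : (⨅ x : E₁, f x) ≤ p := le_iInf₂ fun x _ => iInf_le f x
    have hinfbot : (⨅ x : E₁, f x) = ⊥ := le_bot_iff.1 (hpbot ▸ hinfle)
    refine ⟨0, hmem0, ?_, ?_⟩
    · rw [hdual0, hinfbot, hpbot]
    · intro w hw
      rw [hdual0, hinfbot]
      exact (hweak w hw).trans hpbot.le
  · -- primal value finite
    obtain ⟨p₀, hp⟩ := hrealE' p hplt.ne hpbot
    obtain ⟨r₀, hr₀⟩ := hrealE' (f x₀) (ne_of_lt hx₀dom) (hf_proper.2 x₀)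
    set A : Set (E₂ × ℝ) := {q | ∃ x, f x ≤ (q.2 : EReal) ∧ q.1 - F x ∈ K} with hA
    have hAmem : ∀ (x : E₁) (r : ℝ), f x ≤ (r : EReal) → ∀ k ∈ K, (F x + k, r) ∈ A := by
      intro x r hfr k hk
      exact ⟨x, hfr, by rwa [add_sub_cancel_left]⟩
    have hAconv : Convex ℝ A := by
      rintro q₁ ⟨x₁, hfx₁, hk₁⟩ q₂ ⟨x₂, hfx₂, hk₂⟩ a b ha hb hab
      refine ⟨a • x₁ + b • x₂, ?_, ?_⟩
      · have := hf_conv (show ((x₁, q₁.2) : E₁ × ℝ) ∈ _ from hfx₁)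
          (show ((x₂, q₂.2) : E₁ × ℝ) ∈ _ from hfx₂) ha hb hab
        simpa [Prod.smul_mk, Prod.mk_add_mk, smul_eq_mul] using this
      · have hba : 1 - a = b := by linarith
        have hk₃ := hF x₁ x₂ a ⟨ha, by linarith⟩
        rw [hba] at hk₃
        have hs₁ : a • (q₁.1 - F x₁) ∈ K := hK_cone ha hk₁
        have hs₂ : b • (q₂.1 - F x₂) ∈ K := hK_cone hb hk₂
        have hsum := hKadd _ (hKadd _ hs₁ _ hs₂) _ hk₃
        have heq : a • (q₁.1 - F x₁) + b • (q₂.1 - F x₂)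
            + (a • F x₁ + b • F x₂ - F (a • x₁ + b • x₂))
            = (a • q₁ + b • q₂).1 - F (a • x₁ + b • x₂) := by
          simp only [Prod.fst_add, Prod.smul_fst]
          module
        rwa [heq] at hsum
    have hAne : A.Nonempty := ⟨(F x₀ + 0, r₀), hAmem x₀ r₀ hr₀.le 0 h0K⟩
    -- (0, p₀) is not in the relative interior of A
    have hz_not : ((0 : E₂), p₀) ∉ intrinsicInterior ℝ A := by
      intro hri
      have hlt1 : p < ((p₀ + 1 : ℝ) : EReal) := by
        rw [hp]; exact_mod_cast lt_add_one p₀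
      rw [hpdef] at hlt1
      rw [iInf_lt_iff] at hlt1
      obtain ⟨x₁, hx₁⟩ := hlt1
      rw [iInf_lt_iff] at hx₁
      obtain ⟨hx₁S, hx₁lt⟩ := hx₁
      have hyA : ((0 : E₂), p₀ + 1) ∈ A :=
        ⟨x₁, hx₁lt.le, by rw [zero_sub]; exact Set.mem_neg.1 hx₁S⟩
      obtain ⟨ε, hε, hmem⟩ := extend_beyond' hri hyA
      have heq : ((0 : E₂), p₀) + ε • (((0 : E₂), p₀) - ((0 : E₂), p₀ + 1))
          = ((0 : E₂), p₀ - ε) := by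
        rw [Prod.ext_iff]
        constructor
        · simp
        · simp [smul_eq_mul]; ring
      rw [heq] at hmem
      obtain ⟨x₂, hfx₂, hk₂⟩ := hmem
      have hx₂S : x₂ ∈ S := by
        rw [zero_sub] at hk₂
        exact Set.mem_neg.2 hk₂
      have hple2 : p ≤ f x₂ := iInf₂_le x₂ hx₂S
      have : (p₀ : EReal) ≤ ((p₀ - ε : ℝ) : EReal) := hp ▸ hple2.trans hfx₂
      rw [EReal.coe_le_coe_iff] at this
      linarith
    obtain ⟨φ, hφle, q₁, hq₁A, hq₁strict⟩ := proper_separation' hAconv hAne hz_not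
    -- decompose φ
    set v₁ : E₂ := (InnerProductSpace.toDual ℝ E₂).symm
      (φ.comp (ContinuousLinearMap.inl ℝ E₂ ℝ)) with hv₁
    set α : ℝ := φ ((0 : E₂), (1 : ℝ)) with hα
    have hφdec : ∀ (u : E₂) (t : ℝ), φ (u, t) = ⟪v₁, u⟫ + t * α := by
      intro u t
      have h1 : ⟪v₁, u⟫ = φ (u, (0:ℝ)) := by
        rw [hv₁, InnerProductSpace.toDual_symm_apply]
        rfl
      have h2 : ((u, t) : E₂ × ℝ) = (u, (0:ℝ)) + t • ((0:E₂), (1:ℝ)) := by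
        rw [Prod.ext_iff]; constructor <;> simp
      rw [h2, map_add, map_smul, smul_eq_mul, ← h1]
    have hφz : φ ((0 : E₂), p₀) = p₀ * α := by
      rw [hφdec]; simp [inner_zero_right]
    have hsep : ∀ q ∈ A, p₀ * α ≤ ⟪v₁, q.1⟫ + q.2 * α := by
      intro q hq
      have := hφle q hq
      rwa [hφz, show q = (q.1, q.2) from rfl, hφdec] at this
    -- the cone inequality for v₁
    have hv₁K : ∀ k ∈ K, 0 ≤ ⟪v₁, k⟫ := by
      intro k hk
      refine aux_nonneg' (b := p₀ * α) (c := ⟪v₁, F x₀⟫ + r₀ * α) fun s hs => ?_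
      have hmem := hAmem x₀ r₀ hr₀.le (s • k) (hK_cone hs hk)
      have := hsep _ hmem
      simp only [inner_add_right, real_inner_smul_right] at this
      linarith
    -- α is nonnegative
    have hα0 : 0 ≤ α := by
      refine aux_nonneg' (b := p₀ * α) (c := ⟪v₁, F x₀ + 0⟫ + r₀ * α) fun s hs => ?_
      have hfr : f x₀ ≤ ((r₀ + s : ℝ) : EReal) := by
        rw [hr₀]; exact_mod_cast by linarith
      have hmem := hAmem x₀ (r₀ + s) hfr 0 h0K
      have := hsep _ hmem
      simp only at this
      linarith
    by_cases hαz : α = 0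
    · -- degenerate case: contradiction with Slater
      exfalso
      rw [hαz] at hsep
      simp only [mul_zero, add_zero] at hsep
      have hstrict : 0 < ⟪v₁, q₁.1⟫ := by
        have := hq₁strict
        rw [hφz, show q₁ = (q₁.1, q₁.2) from rfl, hφdec] at this
        simpa [hαz] using this
      have hvFx₀ : ⟪v₁, F x₀⟫ = 0 := by
        refine le_antisymm ?_ ?_
        · have := hv₁K _ hnegFx₀K
          rw [inner_neg_right] at this
          linarith
        · have := hsep _ (hAmem x₀ r₀ hr₀.le 0 h0K)
          simpa using this
      have hvK0 : ∀ k ∈ K, ⟪v₁, k⟫ = 0 := by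
        intro k hk
        refine le_antisymm ?_ (hv₁K k hk)
        have hnegk : -k ∈ -K := by rw [Set.mem_neg, neg_neg]; exact hk
        obtain ⟨ε, hε, hmem⟩ := extend_beyond' hFx₀ri hnegk
        have : -(F x₀ + ε • (F x₀ - -k)) ∈ K := Set.mem_neg.1 hmem
        have h5 := hv₁K _ this
        rw [inner_neg_right, inner_add_right, real_inner_smul_right, inner_sub_right,
          inner_neg_right, hvFx₀] at h5
        nlinarith
      obtain ⟨x₁, hfx₁, hkx₁⟩ := hq₁A
      have hq₁eq : ⟪v₁, q₁.1⟫ = ⟪v₁, F x₁⟫ := by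
        have h6 : ⟪v₁, q₁.1 - F x₁⟫ = 0 := hvK0 _ hkx₁
        rw [inner_sub_right] at h6
        linarith
      have hx₁dom : x₁ ∈ edom f := lt_of_le_of_lt hfx₁ (EReal.coe_lt_top _)
      -- the scalarized map vanishes on edom f
      obtain ⟨ε, hε, hy⟩ := extend_beyond' hx₀ri hx₁dom
      set y : E₁ := x₀ + ε • (x₀ - x₁) with hydef
      set l : ℝ := ε / (1 + ε) with hl
      have hlpos : 0 < l := by positivity
      have hl1 : l < 1 := by
        rw [hl, div_lt_one (by positivity)]; linarith
      have hcombo : l • x₁ + (1 - l) • y = x₀ := by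
        rw [hydef, hl]
        have h1ε : (1:ℝ) + ε ≠ 0 := by positivity
        have : (1:ℝ) - ε / (1 + ε) = 1 / (1 + ε) := by field_simp; ring
        rw [this]
        rw [show (1 / (1 + ε) : ℝ) • (x₀ + ε • (x₀ - x₁))
            = (1 / (1 + ε)) • x₀ + (ε / (1 + ε)) • x₀ - (ε / (1 + ε)) • x₁ by
          rw [smul_add, smul_smul, smul_sub]
          rw [show (1 / (1 + ε) * ε : ℝ) = ε / (1 + ε) by field_simp]
          abel]
        rw [show (ε / (1 + ε) : ℝ) • x₁ + ((1 / (1 + ε)) • x₀ + (ε / (1 + ε)) • x₀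
            - (ε / (1 + ε)) • x₁) = (1 / (1 + ε) + ε / (1 + ε)) • x₀ by
          rw [add_smul]; abel]
        rw [show (1 / (1 + ε) + ε / (1 + ε) : ℝ) = 1 by field_simp]
        rw [one_smul]
      have hk₄ := hF x₁ y l ⟨hlpos.le, hl1.le⟩
      rw [hcombo] at hk₄
      have haff : ⟪v₁, F x₀⟫ = l * ⟪v₁, F x₁⟫ + (1 - l) * ⟪v₁, F y⟫ := by
        have h7 := hvK0 _ hk₄
        rw [inner_sub_right, inner_add_right, real_inner_smul_right,
          real_inner_smul_right] at h7
        linarith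
      have hgy : 0 ≤ ⟪v₁, F y⟫ := by
        obtain ⟨ry, hry⟩ := hrealE' (f y) (ne_of_lt hy) (hf_proper.2 y)
        have := hsep _ (hAmem y ry hry.le 0 h0K)
        simpa using this
      have hgx₁ : 0 < ⟪v₁, F x₁⟫ := hq₁eq ▸ hstrict
      nlinarith
    · -- nondegenerate case
      have hαpos : 0 < α := lt_of_le_of_ne hα0 (Ne.symm hαz)
      set v : E₂ := α⁻¹ • v₁ with hv
      have hinner : ∀ u : E₂, ⟪v, u⟫ = α⁻¹ * ⟪v₁, u⟫ := fun u => real_inner_smul_left _ _ _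
      have hsep' : ∀ q ∈ A, p₀ ≤ ⟪v, q.1⟫ + q.2 := by
        intro q hq
        have h8 := hsep q hq
        rw [hinner]
        rw [show α⁻¹ * ⟪v₁, q.1⟫ + q.2 = (⟪v₁, q.1⟫ + q.2 * α) / α by field_simp; try ring]
        rw [le_div_iff₀ hαpos]
        linarith
      have hvmem : v ∈ -polarCone K := by
        rw [Set.mem_neg]
        intro k hk
        rw [inner_neg_left, hinner]
        have := hv₁K k hk
        have : 0 ≤ α⁻¹ * ⟪v₁, k⟫ := mul_nonneg (by positivity) this
        linarith
      have hlb : ∀ x : E₁, p ≤ f x + ((⟪v, F x⟫ : ℝ) : EReal) := by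
        intro x
        by_cases hxt : f x = ⊤
        · rw [hxt, EReal.top_add_coe]; exact le_top
        · obtain ⟨r, hr⟩ := hrealE' (f x) hxt (hf_proper.2 x)
          have := hsep' _ (hAmem x r hr.le 0 h0K)
          simp only [add_zero] at this
          rw [hr, hp, ← EReal.coe_add]
          exact_mod_cast by linarith
      have hdual_ge : p ≤ ⨅ x : E₁, (f x + ((⟪v, F x⟫ : ℝ) : EReal)) := le_iInf hlb
      exact ⟨v, hvmem, le_antisymm hdual_ge (hweak v hvmem),
        fun w hw => (hweak w hw).trans hdual_ge⟩
end
end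

section
/- Let g : ℝⁿ → ℝ ∪ {+∞} be proper, convex and permutation invariant (g(σ(v)) = g(v) for every v ∈ ℝⁿ and every permutation σ of the coordinates), and let λ : Sⁿ → ℝⁿ assign to each real symmetric n×n matrix X the vector λ(X) = (λ₁(X), …, λ_n(X)) of its eigenvalues in nonincreasing order. Then the spectral function g ∘ λ : Sⁿ → ℝ ∪ {+∞} is convex, and its Fenchel conjugate satisfies (g ∘ λ)* = g* ∘ λ. -/
open scoped RealInnerProductSpace Pointwise
open Filter

noncomputable section

variable {E E₁ E₂ : Type*}
  [NormedAddCommGroup E] [InnerProductSpace ℝ E] [FiniteDimensional ℝ E]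
  [NormedAddCommGroup E₁] [InnerProductSpace ℝ E₁] [FiniteDimensional ℝ E₁]
  [NormedAddCommGroup E₂] [InnerProductSpace ℝ E₂] [FiniteDimensional ℝ E₂]

/-- The eigenvalues of a real symmetric matrix, arranged in nonincreasing order. -/
def eigDesc {n : ℕ} {X : Matrix (Fin n) (Fin n) ℝ} (hX : X.IsHermitian) : Fin n → ℝ :=
  fun i => hX.eigenvalues (Tuple.sort (fun j => -hX.eigenvalues j) i)

open Classical in
/-- The spectral function `g ∘ λ` on the space of real symmetric matrices, extended by `+∞`
off the symmetric matrices. -/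
def specFn {n : ℕ} (g : (Fin n → ℝ) → EReal) (X : Matrix (Fin n) (Fin n) ℝ) : EReal :=
  if hX : X.IsHermitian then g (eigDesc hX) else ⊤

section SpectralHelpers
open Matrix Polynomial

variable {n : ℕ}

lemma antitone_eigDesc {X : Matrix (Fin n) (Fin n) ℝ} (hX : X.IsHermitian) :
    Antitone (eigDesc hX) := by
  intro i j hij
  have h := Tuple.monotone_sort (fun j => -hX.eigenvalues j) hij
  simpa [eigDesc] using h

lemma exists_orth_decomp {X : Matrix (Fin n) (Fin n) ℝ} (hX : X.IsHermitian) :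
    ∃ V : Matrix (Fin n) (Fin n) ℝ, Vᵀ * V = 1 ∧ V * Vᵀ = 1 ∧
      X = V * diagonal (eigDesc hX) * Vᵀ := by
  set U : Matrix (Fin n) (Fin n) ℝ := (hX.eigenvectorUnitary : Matrix (Fin n) (Fin n) ℝ)
  have hU1 : Uᵀ * U = 1 := by
    have := (Matrix.mem_unitaryGroup_iff').mp hX.eigenvectorUnitary.2
    simpa [star_eq_conjTranspose] using this
  have hspec : X = U * diagonal hX.eigenvalues * Uᵀ := by
    have := hX.spectral_theorem
    simpa [star_eq_conjTranspose, Function.comp] using this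
  set σ : Equiv.Perm (Fin n) := Tuple.sort (fun j => -hX.eigenvalues j)
  have hU2 : U * Uᵀ = 1 := mul_eq_one_comm.mp hU1
  refine ⟨U.submatrix id σ, ?_, ?_, ?_⟩
  · rw [transpose_submatrix, ← submatrix_mul _ _ _ id _ Function.bijective_id, hU1,
      submatrix_one_equiv]
  · rw [transpose_submatrix, submatrix_mul_transpose_submatrix, hU2]
  · have hd : diagonal (eigDesc hX) = (diagonal hX.eigenvalues).submatrix σ σ := by
      rw [submatrix_diagonal_equiv]; rfl
    rw [hd, transpose_submatrix, submatrix_mul_equiv, submatrix_mul_equiv, submatrix_id_id,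
      ← hspec]

lemma det_smul_one_sub {V : Matrix (Fin n) (Fin n) ℝ} (hV : V * Vᵀ = 1)
    (d : Fin n → ℝ) (t : ℝ) :
    (t • (1 : Matrix (Fin n) (Fin n) ℝ) - V * diagonal d * Vᵀ).det = ∏ i, (t - d i) := by
  have hdet : V.det * Vᵀ.det = 1 := by rw [← det_mul, hV, det_one]
  have h1 : t • (1 : Matrix (Fin n) (Fin n) ℝ) - V * diagonal d * Vᵀ
      = V * (diagonal (fun i => t - d i)) * Vᵀ := by
    have : diagonal (fun i : Fin n => t - d i)
        = t • (1 : Matrix (Fin n) (Fin n) ℝ) - diagonal d := by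
      rw [smul_one_eq_diagonal, ← diagonal_sub]
    rw [this, mul_sub, sub_mul, mul_smul_comm, smul_mul_assoc, Matrix.mul_one, hV]
  rw [h1, det_mul, det_mul, mul_comm V.det, mul_assoc, hdet, mul_one, det_diagonal]

lemma antitone_eq_of_prod_eq {d e : Fin n → ℝ} (hd : Antitone d) (he : Antitone e)
    (h : ∀ t : ℝ, ∏ i, (t - d i) = ∏ i, (t - e i)) : d = e := by
  have hpq : ∏ i, (X - C (d i)) = ∏ i, (X - C (e i)) := by
    apply Polynomial.funext; intro t
    simpa [eval_prod] using h t
  have hm : (Finset.univ.val.map d) = (Finset.univ.val.map e) := by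
    have h1 : ∀ f : Fin n → ℝ, ∏ i, (X - C (f i))
        = ((Finset.univ.val.map f).map fun a => X - C a).prod := by
      intro f; rw [Multiset.map_map]; rfl
    have := congrArg Polynomial.roots hpq
    rwa [h1 d, h1 e, roots_multiset_prod_X_sub_C, roots_multiset_prod_X_sub_C] at this
  -- turn into lists
  have hl : (List.ofFn d : Multiset ℝ) = (List.ofFn e : Multiset ℝ) := by
    rw [List.ofFn_eq_map, List.ofFn_eq_map, ← Multiset.map_coe, ← Multiset.map_coe]
    have : ((List.finRange n : List (Fin n)) : Multiset (Fin n)) = Finset.univ.val := rfl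
    rw [this, hm]
  have hperm : List.Perm (List.ofFn d) (List.ofFn e) := Multiset.coe_eq_coe.mp hl
  have hsd : (List.ofFn d).Pairwise (· ≥ ·) := by
    rw [List.pairwise_ofFn]; intro i j hij; exact hd hij.le
  have hse : (List.ofFn e).Pairwise (· ≥ ·) := by
    rw [List.pairwise_ofFn]; intro i j hij; exact he hij.le
  have := List.Perm.eq_of_pairwise' hsd hse hperm
  exact funext fun i => by
    have h1 := List.ofFn_inj.mp this
    exact congrFun h1 i

lemma eigDesc_conj {V : Matrix (Fin n) (Fin n) ℝ} {d : Fin n → ℝ} (hV : Vᵀ * V = 1)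
    (hd : Antitone d) (h : (V * diagonal d * Vᵀ).IsHermitian) :
    eigDesc h = d := by
  obtain ⟨W, hW1, hW2, hdecomp⟩ := exists_orth_decomp h
  have hV2 : V * Vᵀ = 1 := mul_eq_one_comm.mp hV
  refine antitone_eq_of_prod_eq (antitone_eigDesc h) hd fun t => ?_
  rw [← det_smul_one_sub hW2 (eigDesc h) t, ← hdecomp, det_smul_one_sub hV2 d t]

lemma monovary_antitone {a b : Fin n → ℝ} (ha : Antitone a) (hb : Antitone b) :
    Monovary a b := by
  intro i j hij
  rcases le_or_gt j i with h | h
  · exact ha h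
  · exact absurd (hb h.le) (not_le.2 hij)

lemma quadratic_diag {A R : Matrix (Fin n) (Fin n) ℝ} (hA : A.IsHermitian)
    (hR : Rᵀ * R = 1) :
    ∃ B ∈ doublyStochastic ℝ (Fin n), (fun i => (Rᵀ * A * R) i i) = B *ᵥ eigDesc hA := by
  obtain ⟨V, hV1, hV2, hdec⟩ := exists_orth_decomp hA
  have hR2 : R * Rᵀ = 1 := mul_eq_one_comm.mp hR
  set Q : Matrix (Fin n) (Fin n) ℝ := Rᵀ * V with hQ
  have hQQt : Q * Qᵀ = 1 := by
    rw [hQ, transpose_mul, transpose_transpose, mul_assoc, ← mul_assoc V, hV2,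
      Matrix.one_mul, hR]
  have hQtQ : Qᵀ * Q = 1 := mul_eq_one_comm.mp hQQt
  refine ⟨Matrix.of (fun i j => (Q i j)^2), ?_, ?_⟩
  · rw [mem_doublyStochastic_iff_sum]
    refine ⟨fun i j => sq_nonneg _, fun i => ?_, fun j => ?_⟩
    · have : (Q * Qᵀ) i i = ∑ j, (Q i j)^2 := by
        simp [mul_apply, sq]
      rw [show (∑ j, Matrix.of (fun i j => (Q i j)^2) i j) = ∑ j, (Q i j)^2 from rfl,
        ← this, hQQt]
      simp
    · have : (Qᵀ * Q) j j = ∑ i, (Q i j)^2 := by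
        simp [mul_apply, sq]
      rw [show (∑ i, Matrix.of (fun i j => (Q i j)^2) i j) = ∑ i, (Q i j)^2 from rfl,
        ← this, hQtQ]
      simp
  · funext i
    have : Rᵀ * A * R = Q * diagonal (eigDesc hA) * Qᵀ := by
      conv_lhs => rw [hdec]
      simp only [hQ, transpose_mul, transpose_transpose, Matrix.mul_assoc]
    rw [this]
    simp only [mulVec, dotProduct, mul_apply, diagonal_apply, transpose_apply, Matrix.of_apply]
    simp only [mul_ite, mul_zero, ite_mul, zero_mul, Finset.sum_ite_eq', Finset.mem_univ,
      if_true]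
    exact Finset.sum_congr rfl fun x _ => by ring

lemma sum_perm_entry (a b : Fin n → ℝ) (σ : Equiv.Perm (Fin n)) (i : Fin n) :
    ∑ j, a i * b j * (σ.permMatrix ℝ) i j = a i * b (σ i) := by
  simp [Equiv.Perm.permMatrix, PEquiv.toMatrix_apply, Equiv.toPEquiv_apply, mul_ite,
    Finset.sum_ite_eq']

lemma bilin_le_of_convexHull {a b : Fin n → ℝ} (ha : Antitone a) (hb : Antitone b)
    {C : Matrix (Fin n) (Fin n) ℝ} (hC : C ∈ doublyStochastic ℝ (Fin n)) :
    ∑ i, ∑ j, a i * b j * C i j ≤ ∑ i, a i * b i := by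
  have hmem : C ∈ convexHull ℝ {σ.permMatrix ℝ | σ : Equiv.Perm (Fin n)} := by
    rw [← doublyStochastic_eq_convexHull_permMatrix]; exact hC
  show C ∈ {D : Matrix (Fin n) (Fin n) ℝ | ∑ i, ∑ j, a i * b j * D i j ≤ ∑ i, a i * b i}
  refine convexHull_min ?_ ?_ hmem
  · rintro _ ⟨σ, rfl⟩
    simp only [Set.mem_setOf_eq]
    rw [Finset.sum_congr rfl fun i _ => sum_perm_entry a b σ i]
    exact (monovary_antitone ha hb).sum_mul_comp_perm_le_sum_mul
  · rintro D hD D' hD' α β hα hβ hαβ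
    simp only [Set.mem_setOf_eq] at hD hD' ⊢
    have expand : ∀ i j : Fin n, a i * b j * (α • D + β • D') i j
        = α * (a i * b j * D i j) + β * (a i * b j * D' i j) := by
      intro i j; simp only [Matrix.add_apply, Matrix.smul_apply, smul_eq_mul]; ring
    calc ∑ i, ∑ j, a i * b j * (α • D + β • D') i j
        = α * (∑ i, ∑ j, a i * b j * D i j) + β * (∑ i, ∑ j, a i * b j * D' i j) := by
          simp_rw [expand, Finset.sum_add_distrib, Finset.mul_sum]
      _ ≤ α * (∑ i, a i * b i) + β * (∑ i, a i * b i) := by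
          exact add_le_add (mul_le_mul_of_nonneg_left hD hα)
            (mul_le_mul_of_nonneg_left hD' hβ)
      _ = ∑ i, a i * b i := by rw [← add_mul, hαβ, one_mul]

lemma trace_diag_eq {Y X : Matrix (Fin n) (Fin n) ℝ} (hY : Y.IsHermitian)
    {U : Matrix (Fin n) (Fin n) ℝ} (hdecY : Y = U * diagonal (eigDesc hY) * Uᵀ) :
    Matrix.trace (Y * X) = ∑ i, eigDesc hY i * (Uᵀ * X * U) i i := by
  conv_lhs => rw [hdecY]
  rw [Matrix.mul_assoc, Matrix.mul_assoc, trace_mul_comm]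
  simp only [Matrix.trace, Matrix.diag, mul_apply, diagonal_apply, transpose_apply, ite_mul,
    zero_mul, Finset.sum_ite_eq, Finset.mem_univ, if_true]
  refine Finset.sum_congr rfl fun x _ => ?_
  rw [Finset.mul_sum]
  refine Finset.sum_congr rfl fun j _ => ?_
  rw [Finset.sum_mul, Finset.mul_sum, Finset.sum_mul, Finset.mul_sum]
  exact Finset.sum_congr rfl fun k _ => by ring

lemma vonNeumann {Y X : Matrix (Fin n) (Fin n) ℝ} (hY : Y.IsHermitian) (hX : X.IsHermitian) :
    Matrix.trace (Y * X) ≤ ∑ i, eigDesc hY i * eigDesc hX i := by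
  obtain ⟨U, hU1, hU2, hdecY⟩ := exists_orth_decomp hY
  obtain ⟨B, hB, hdiag⟩ := quadratic_diag hX hU1
  rw [trace_diag_eq hY hdecY]
  have : ∀ i, (Uᵀ * X * U) i i = ∑ j, B i j * eigDesc hX j := by
    intro i; exact congrFun hdiag i
  calc ∑ i, eigDesc hY i * (Uᵀ * X * U) i i
      = ∑ i, ∑ j, eigDesc hY i * eigDesc hX j * B i j := by
        refine Finset.sum_congr rfl fun i _ => ?_
        rw [this i, Finset.mul_sum]
        exact Finset.sum_congr rfl fun j _ => by ring
    _ ≤ ∑ i, eigDesc hY i * eigDesc hX i :=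
        bilin_le_of_convexHull (antitone_eigDesc hY) (antitone_eigDesc hX) hB

lemma isHermitian_conj' (V : Matrix (Fin n) (Fin n) ℝ) (d : Fin n → ℝ) :
    (V * diagonal d * Vᵀ).IsHermitian := by
  have h := isHermitian_mul_mul_conjTranspose V (isHermitian_diagonal d)
  rwa [conjTranspose_eq_transpose_of_trivial] at h

lemma permMatrix_mulVec (σ : Equiv.Perm (Fin n)) (u : Fin n → ℝ) :
    (σ.permMatrix ℝ) *ᵥ u = u ∘ σ := by
  funext i
  simp [mulVec, dotProduct, Equiv.Perm.permMatrix, PEquiv.toMatrix_apply, Equiv.toPEquiv_apply,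
    ite_mul, Finset.sum_ite_eq']

lemma econv_slice {g : (Fin n → ℝ) → EReal} (hg : EConvexOn g) {u v : Fin n → ℝ} {s t : ℝ}
    (hu : g u ≤ (s : EReal)) (hv : g v ≤ (t : EReal)) {α β : ℝ}
    (hα : 0 ≤ α) (hβ : 0 ≤ β) (hαβ : α + β = 1) :
    g (α • u + β • v) ≤ ((α * s + β * t : ℝ) : EReal) := by
  have h := hg (show ((u, s) : (Fin n → ℝ) × ℝ) ∈ _ from hu)
    (show ((v, t) : (Fin n → ℝ) × ℝ) ∈ _ from hv) hα hβ hαβ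
  simpa [Prod.smul_fst, Prod.smul_snd, smul_eq_mul] using h

theorem main_aux {n : ℕ} (g : (Fin n → ℝ) → EReal) (hg_conv : EConvexOn g)
    (hg_perm : ∀ σ : Equiv.Perm (Fin n), ∀ v : Fin n → ℝ, g (v ∘ σ) = g v) :
    Convex ℝ {p : Matrix (Fin n) (Fin n) ℝ × ℝ | specFn g p.1 ≤ (p.2 : EReal)} ∧
    ∀ (Y : Matrix (Fin n) (Fin n) ℝ) (hY : Y.IsHermitian),
      (⨆ X : Matrix (Fin n) (Fin n) ℝ, ((Matrix.trace (Y * X) : ℝ) : EReal) - specFn g X)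
        = ⨆ x : Fin n → ℝ, ((∑ i, eigDesc hY i * x i : ℝ) : EReal) - g x := by
  have hperm_le : ∀ (u : Fin n → ℝ) (s : ℝ), g u ≤ (s : EReal) →
      ∀ C ∈ doublyStochastic ℝ (Fin n), g (C *ᵥ u) ≤ (s : EReal) := by
    intro u s hu C hC
    have hmem : C ∈ convexHull ℝ {σ.permMatrix ℝ | σ : Equiv.Perm (Fin n)} := by
      rw [← doublyStochastic_eq_convexHull_permMatrix]; exact hC
    show C ∈ {D : Matrix (Fin n) (Fin n) ℝ | g (D *ᵥ u) ≤ (s : EReal)}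
    refine convexHull_min ?_ ?_ hmem
    · rintro _ ⟨σ, rfl⟩
      show g (σ.permMatrix ℝ *ᵥ u) ≤ (s : EReal)
      rw [permMatrix_mulVec, hg_perm σ u]; exact hu
    · rintro D hD D' hD' α β hα hβ hαβ
      show g ((α • D + β • D') *ᵥ u) ≤ (s : EReal)
      have : (α • D + β • D') *ᵥ u = α • (D *ᵥ u) + β • (D' *ᵥ u) := by
        rw [Matrix.add_mulVec, Matrix.smul_mulVec, Matrix.smul_mulVec]
      rw [this]
      refine le_trans (econv_slice hg_conv hD hD' hα hβ hαβ) ?_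
      rw [show α * s + β * s = s by rw [← add_mul, hαβ, one_mul]]
  constructor
  · rintro ⟨X, s⟩ hXs ⟨Z, t⟩ hZt α β hα hβ hαβ
    simp only [Set.mem_setOf_eq] at hXs hZt ⊢
    by_cases hX : X.IsHermitian
    swap
    · rw [specFn, dif_neg hX] at hXs
      exact absurd hXs (EReal.coe_lt_top s).not_ge
    by_cases hZ : Z.IsHermitian
    swap
    · rw [specFn, dif_neg hZ] at hZt
      exact absurd hZt (EReal.coe_lt_top t).not_ge
    rw [specFn, dif_pos hX] at hXs
    rw [specFn, dif_pos hZ] at hZt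
    have hM : (α • X + β • Z).IsHermitian := by
      unfold Matrix.IsHermitian
      rw [conjTranspose_add, conjTranspose_smul, conjTranspose_smul, hX.eq, hZ.eq]
      simp
    obtain ⟨R, hR1, hR2, hdecM⟩ := exists_orth_decomp hM
    have hdiagM : Rᵀ * (α • X + β • Z) * R = diagonal (eigDesc hM) := by
      conv_lhs => rw [hdecM]
      simp only [Matrix.mul_assoc]
      rw [hR1, Matrix.mul_one, ← Matrix.mul_assoc, hR1, Matrix.one_mul]
    set dX := fun i => (Rᵀ * X * R) i i with hdX
    set dZ := fun i => (Rᵀ * Z * R) i i with hdZ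
    have hsplit : eigDesc hM = α • dX + β • dZ := by
      funext i
      have h1 : eigDesc hM i = (Rᵀ * (α • X + β • Z) * R) i i := by
        rw [hdiagM, diagonal_apply_eq]
      rw [h1]
      have h2 : Rᵀ * (α • X + β • Z) * R = α • (Rᵀ * X * R) + β • (Rᵀ * Z * R) := by
        rw [Matrix.mul_add, Matrix.add_mul]
        congr 1 <;> rw [mul_smul_comm, smul_mul_assoc]
      rw [h2]
      simp [hdX, hdZ]
    obtain ⟨BX, hBX, hBXd⟩ := quadratic_diag hX hR1
    obtain ⟨BZ, hBZ, hBZd⟩ := quadratic_diag hZ hR1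
    have hgdX : g dX ≤ (s : EReal) := by
      rw [hdX, hBXd]; exact hperm_le _ s hXs BX hBX
    have hgdZ : g dZ ≤ (t : EReal) := by
      rw [hdZ, hBZd]; exact hperm_le _ t hZt BZ hBZ
    show specFn g (α • (X, s) + β • (Z, t)).1 ≤ (((α • (X, s) + β • (Z, t)).2 : ℝ) : EReal)
    have hfst : (α • (X, s) + β • (Z, t)).1 = α • X + β • Z := rfl
    have hsnd : (α • (X, s) + β • (Z, t)).2 = α * s + β * t := rfl
    rw [hfst, hsnd, specFn, dif_pos hM, hsplit]
    exact econv_slice hg_conv hgdX hgdZ hα hβ hαβ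
  · intro Y hY
    apply le_antisymm
    · refine iSup_le fun X => ?_
      by_cases hX : X.IsHermitian
      · refine le_trans ?_ (le_iSup _ (eigDesc hX))
        rw [specFn, dif_pos hX]
        exact EReal.sub_le_sub (EReal.coe_le_coe_iff.2 (vonNeumann hY hX)) le_rfl
      · rw [specFn, dif_neg hX, EReal.sub_top]
        exact bot_le
    · refine iSup_le fun x => ?_
      set τ := Tuple.sort (fun j => -x j) with hτ
      have hanti : Antitone (x ∘ τ) := by
        intro i j hij
        have := Tuple.monotone_sort (fun j => -x j) hij
        simpa [hτ] using this
      have hgx : g (x ∘ τ) = g x := hg_perm τ x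
      have hsum : ∑ i, eigDesc hY i * x i ≤ ∑ i, eigDesc hY i * (x ∘ τ) i := by
        have h1 : ∑ i, eigDesc hY i * x i = ∑ i, eigDesc hY i * (x ∘ τ) (τ⁻¹ i) :=
          Finset.sum_congr rfl fun i _ => by simp
        rw [h1]
        exact (monovary_antitone (antitone_eigDesc hY) hanti).sum_mul_comp_perm_le_sum_mul
          (σ := τ⁻¹)
      obtain ⟨V, hV1, hV2, hdecY⟩ := exists_orth_decomp hY
      have hXmH : (V * diagonal (x ∘ τ) * Vᵀ).IsHermitian := isHermitian_conj' V (x ∘ τ)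
      have heq : eigDesc hXmH = x ∘ τ := eigDesc_conj hV1 hanti hXmH
      have hdiagXm : Vᵀ * (V * diagonal (x ∘ τ) * Vᵀ) * V = diagonal (x ∘ τ) := by
        simp only [Matrix.mul_assoc]
        rw [hV1, Matrix.mul_one, ← Matrix.mul_assoc, hV1, Matrix.one_mul]
      have htr : Matrix.trace (Y * (V * diagonal (x ∘ τ) * Vᵀ))
          = ∑ i, eigDesc hY i * (x ∘ τ) i := by
        rw [trace_diag_eq hY hdecY, Finset.sum_congr rfl
          fun i _ => by rw [hdiagXm, diagonal_apply_eq]]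
      refine le_trans ?_ (le_iSup _ (V * diagonal (x ∘ τ) * Vᵀ))
      rw [specFn, dif_pos hXmH, heq, hgx, htr]
      exact EReal.sub_le_sub (EReal.coe_le_coe_iff.2 hsum) le_rfl

end SpectralHelpers

/-- For a proper, convex, permutation-invariant `g : ℝⁿ → ℝ ∪ {+∞}`, the
spectral function `g ∘ λ` is convex on `Sⁿ` (with the trace inner product) and
`(g ∘ λ)* = g* ∘ λ`. -/
theorem spectral_function_convex_and_conjugate
    {n : ℕ} (g : (Fin n → ℝ) → EReal)
    (hg_proper : EProper g) (hg_conv : EConvexOn g)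
    (hg_perm : ∀ σ : Equiv.Perm (Fin n), ∀ v : Fin n → ℝ, g (v ∘ σ) = g v) :
    Convex ℝ {p : Matrix (Fin n) (Fin n) ℝ × ℝ | specFn g p.1 ≤ (p.2 : EReal)} ∧
    ∀ (Y : Matrix (Fin n) (Fin n) ℝ) (hY : Y.IsHermitian),
      (⨆ X : Matrix (Fin n) (Fin n) ℝ, ((Matrix.trace (Y * X) : ℝ) : EReal) - specFn g X)
        = ⨆ x : Fin n → ℝ, ((∑ i, eigDesc hY i * x i : ℝ) : EReal) - g x :=
  main_aux g hg_conv hg_perm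
end
end
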